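/- Let r ≥ 1, 0 ≤ i ≤ r, b ≥ 1, n ≥ 2^{r+1}, and q = 2^b. Let e_k^{(1)}, e_k^{(2)} ∈ F_q^n for 1 ≤ k ≤ 2^{r+1}−1 be vectors such that for each ℓ ∈ {1,2} the family e_1^{(ℓ)}, …, e_{2^{r+1}−1}^{(ℓ)} is linearly independent. For 0 ≤ j ≤ i define M_j = Σ_{k : G_Had^{(r)}(k,j)=1} e_k^{(1)}(e_k^{(2)})ᵀ ∈ F_q^{n×n}, and define M' = Σ_{k=1}^{2^{r−i}} e_k^{(1)}(e_k^{(2)})ᵀ. Then: rank(M') = 2^{r−i}; M' ⪯ M_j for every 0 ≤ j ≤ i (each M_j has rank 2^r and rank(M_j − M') = 2^r − 2^{r−i}); and for every matrix M'' ∈ F_q^{n×n} satisfying M'' ⪯ M_j for all 0 ≤ j ≤ i, one has M'' ⪯ M', i.e., rank(M' − M'') = 2^{r−i} − rank(M''). That is, M' is the unique maximal element among the matrices dominated by M_0, …, M_i in the matrix poset. -/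

import Mathlib

open Matrix Finset Submodule

lemma testBit_compl : ∀ (t m k : ℕ), k < 2 ^ m → t < m →
    Nat.testBit (2 ^ m - 1 - k) t = !Nat.testBit k t := by
  intro t
  induction t with
  | zero =>
    intro m k hk hm
    obtain ⟨m', rfl⟩ : ∃ m', m = m' + 1 := ⟨m - 1, by omega⟩
    have h2 : 2 ^ (m' + 1) = 2 * 2 ^ m' := by ring
    rcases Nat.mod_two_eq_zero_or_one k with h | h
    · have h1 : (2 ^ (m' + 1) - 1 - k) % 2 = 1 := by omega
      simp [Nat.testBit_zero, h1, h]
    · have h1 : (2 ^ (m' + 1) - 1 - k) % 2 = 0 := by omega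
      simp [Nat.testBit_zero, h1, h]
  | succ t ih =>
    intro m k hk hm
    obtain ⟨m', rfl⟩ : ∃ m', m = m' + 1 := ⟨m - 1, by omega⟩
    have h2 : 2 ^ (m' + 1) = 2 * 2 ^ m' := by ring
    rw [Nat.testBit_add_one, Nat.testBit_add_one]
    have hdiv : (2 ^ (m' + 1) - 1 - k) / 2 = 2 ^ m' - 1 - k / 2 := by omega
    rw [hdiv]
    exact ih m' (k / 2) (by omega) (by omega)

lemma card_testBit_false (m t : ℕ) (ht : t < m) :
    ((Finset.range (2 ^ m)).filter (fun k => Nat.testBit k t = false)).card = 2 ^ (m - 1) := by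
  have hsplit := Finset.card_filter_add_card_filter_not
    (s := Finset.range (2 ^ m)) (p := fun k => Nat.testBit k t = false)
  have hbij : ((Finset.range (2 ^ m)).filter (fun k => Nat.testBit k t = false)).card =
      ((Finset.range (2 ^ m)).filter (fun k => ¬ Nat.testBit k t = false)).card := by
    apply Finset.card_bij (fun k _ => k ^^^ 2 ^ t)
    · intro a ha
      simp only [Finset.mem_filter, Finset.mem_range] at ha ⊢
      refine ⟨Nat.xor_lt_two_pow ha.1 (Nat.pow_lt_pow_right one_lt_two ht), ?_⟩
      simp [Nat.testBit_xor, ha.2, Nat.testBit_two_pow_self]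
    · intro a ha b hb hab
      have := congrArg (· ^^^ 2 ^ t) hab
      simpa [Nat.xor_assoc] using this
    · intro b hb
      simp only [Finset.mem_filter, Finset.mem_range] at hb ⊢
      refine ⟨b ^^^ 2 ^ t, ⟨Nat.xor_lt_two_pow hb.1 (Nat.pow_lt_pow_right one_lt_two ht), ?_⟩, ?_⟩
      · simp only [Bool.not_eq_false] at hb
        simp [Nat.testBit_xor, hb.2, Nat.testBit_two_pow_self]
      · simp [Nat.xor_assoc]
  have h2 : 2 ^ m = 2 * 2 ^ (m - 1) := by
    conv_lhs => rw [show m = (m - 1) + 1 by omega]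
    ring
  rw [Finset.card_range] at hsplit
  omega

lemma card_filter_fin (N : ℕ) (p : ℕ → Prop) [DecidablePred p] :
    (Finset.univ.filter (fun k : Fin N => p k.val)).card = ((Finset.range N).filter p).card := by
  apply Finset.card_bij (fun k _ => k.val)
  · intro a ha
    simp only [Finset.mem_filter, Finset.mem_range] at ha ⊢
    exact ⟨a.isLt, ha.2⟩
  · intro a _ b _ hab
    exact Fin.ext hab
  · intro b hb
    simp only [Finset.mem_filter, Finset.mem_range] at hb
    exact ⟨⟨b, hb.1⟩, by simp [hb.2], rfl⟩

variable {F : Type*} [Field F] {m p q : Type*} [Fintype m] [Fintype p] [Fintype q] [DecidableEq m]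

lemma matrank (A : Matrix p m F) : A.rank = Module.finrank F (LinearMap.range A.mulVecLin) := rfl

/-- If rank is additive for `A + B` then the range of `B` is inside range of `A + B`. -/
lemma range_le_of_rank_add (A B : Matrix p m F) (h : (A + B).rank = A.rank + B.rank) :
    LinearMap.range B.mulVecLin ≤ LinearMap.range (A + B).mulVecLin := by
  have hle : LinearMap.range (A + B).mulVecLin ≤
      LinearMap.range A.mulVecLin ⊔ LinearMap.range B.mulVecLin := by
    rintro _ ⟨x, rfl⟩
    rw [mulVecLin_apply, add_mulVec]
    exact add_mem (Submodule.mem_sup_left ⟨x, rfl⟩) (Submodule.mem_sup_right ⟨x, rfl⟩)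
  have hd := Submodule.finrank_sup_add_finrank_inf_eq
    (LinearMap.range A.mulVecLin) (LinearMap.range B.mulVecLin)
  have heq : LinearMap.range (A + B).mulVecLin =
      LinearMap.range A.mulVecLin ⊔ LinearMap.range B.mulVecLin := by
    apply Submodule.eq_of_le_of_finrank_le hle
    rw [← matrank, ← matrank] at hd
    rw [← matrank, h]
    omega
  rw [heq]
  exact le_sup_right

lemma rank_diag_finset (S : Finset m) :
    (Matrix.diagonal (fun k => if k ∈ S then (1 : F) else 0)).rank = S.card := by
  classical
  rw [Matrix.rank_diagonal]
  rw [← Fintype.card_coe S]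
  apply Fintype.card_congr
  apply Equiv.subtypeEquivRight
  intro k
  by_cases h : k ∈ S <;> simp [h]

/-- Block-diagonal rank additivity for a 0/1-diagonal plus a matrix supported away from `T`. -/
lemma rank_diag_add_block (T : Finset m) (B : Matrix m m F)
    (hB : ∀ a c, a ∈ T ∨ c ∈ T → B a c = 0) :
    (Matrix.diagonal (fun k => if k ∈ T then (1 : F) else 0) + B).rank = T.card + B.rank := by
  classical
  set d : m → F := fun k => if k ∈ T then (1 : F) else 0 with hd
  set D := Matrix.diagonal d with hD
  have hDv : ∀ (x : m → F) a, (D *ᵥ x) a = d a * x a := fun x a => mulVec_diagonal d x a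
  have hDrange : ∀ v ∈ LinearMap.range D.mulVecLin, ∀ a ∉ T, v a = 0 := by
    rintro _ ⟨x, rfl⟩ a ha
    rw [mulVecLin_apply, hDv]
    simp [hd, ha]
  have hBrange : ∀ v ∈ LinearMap.range B.mulVecLin, ∀ a ∈ T, v a = 0 := by
    rintro _ ⟨x, rfl⟩ a ha
    have : (B *ᵥ x) a = ∑ c, B a c * x c := by simp [mulVec, dotProduct]
    rw [mulVecLin_apply, this]
    apply Finset.sum_eq_zero
    intro c _
    rw [hB a c (Or.inl ha), zero_mul]
  have hsup : LinearMap.range (D + B).mulVecLin =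
      LinearMap.range D.mulVecLin ⊔ LinearMap.range B.mulVecLin := by
    apply le_antisymm
    · rintro _ ⟨x, rfl⟩
      rw [mulVecLin_apply, add_mulVec]
      exact add_mem (Submodule.mem_sup_left ⟨x, rfl⟩) (Submodule.mem_sup_right ⟨x, rfl⟩)
    · apply sup_le
      · rintro _ ⟨x, rfl⟩
        refine ⟨fun a => if a ∈ T then x a else 0, ?_⟩
        rw [mulVecLin_apply, mulVecLin_apply, add_mulVec]
        have hB0 : B *ᵥ (fun a => if a ∈ T then x a else 0) = 0 := by
          funext a
          have : (B *ᵥ fun a => if a ∈ T then x a else 0) a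
              = ∑ c, B a c * (if c ∈ T then x c else 0) := by simp [mulVec, dotProduct]
          rw [this]
          simp only [Pi.zero_apply]
          apply Finset.sum_eq_zero
          intro c _
          by_cases hc : c ∈ T
          · rw [hB a c (Or.inr hc), zero_mul]
          · simp [hc]
        rw [hB0, add_zero]
        funext a
        rw [hDv, hDv]
        by_cases haT : a ∈ T <;> simp [hd, haT]
      · rintro _ ⟨x, rfl⟩
        refine ⟨fun a => if a ∈ T then 0 else x a, ?_⟩
        rw [mulVecLin_apply, mulVecLin_apply, add_mulVec]
        have hD0 : D *ᵥ (fun a => if a ∈ T then 0 else x a) = 0 := by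
          funext a
          rw [hDv]
          by_cases haT : a ∈ T <;> simp [hd, haT]
        rw [hD0, zero_add]
        funext a
        have h1 : (B *ᵥ fun a => if a ∈ T then 0 else x a) a
            = ∑ c, B a c * (if c ∈ T then 0 else x c) := by simp [mulVec, dotProduct]
        have h2 : (B *ᵥ x) a = ∑ c, B a c * x c := by simp [mulVec, dotProduct]
        rw [h1, h2]
        apply Finset.sum_congr rfl
        intro c _
        by_cases hc : c ∈ T
        · rw [hB a c (Or.inr hc)]; ring
        · simp [hc]
  have hinf : LinearMap.range D.mulVecLin ⊓ LinearMap.range B.mulVecLin = ⊥ := by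
    rw [Submodule.eq_bot_iff]
    rintro v ⟨hv1, hv2⟩
    funext a
    by_cases haT : a ∈ T
    · exact hBrange v hv2 a haT
    · exact hDrange v hv1 a haT
  have hfin := Submodule.finrank_sup_add_finrank_inf_eq
    (LinearMap.range D.mulVecLin) (LinearMap.range B.mulVecLin)
  rw [hinf, finrank_bot, add_zero] at hfin
  have hDrank : D.rank = T.card := rank_diag_finset T
  rw [matrank, hsup, hfin, ← matrank, ← matrank, hDrank]

section Phi
variable [DecidableEq p] [DecidableEq q]

lemma rank_mul_left_inj (A : Matrix p m F) (B : Matrix m q F)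
    (hA : Function.Injective A.mulVecLin) : (A * B).rank = B.rank := by
  rw [matrank, matrank, Matrix.mulVecLin_mul, LinearMap.range_comp]
  exact (LinearEquiv.finrank_eq
    (Submodule.equivMapOfInjective A.mulVecLin hA (LinearMap.range B.mulVecLin))).symm

lemma rank_mul_right_surj (A : Matrix p m F) (B : Matrix m q F)
    (hB : Function.Surjective B.mulVecLin) : (A * B).rank = A.rank := by
  rw [matrank, matrank, Matrix.mulVecLin_mul, LinearMap.range_comp,
    LinearMap.range_eq_top.mpr hB, Submodule.map_top]

end Phi

section Indep
variable {N n : ℕ}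

lemma inj_of_indep (e : Fin N → (Fin n → F)) (he : LinearIndependent F e) : Function.Injective ((Matrix.of e)ᵀ).mulVecLin := by
  have : Function.Injective ((Matrix.of e)ᵀ).mulVec := by
    rw [Matrix.mulVec_injective_iff]
    simpa using he
  exact this

lemma surj_of_indep (e : Fin N → (Fin n → F)) (he : LinearIndependent F e) : Function.Surjective (Matrix.of e).mulVecLin := by
  rw [← LinearMap.range_eq_top]
  apply Submodule.eq_top_of_finrank_eq
  have h1 : Module.finrank F (LinearMap.range (Matrix.of e).mulVecLin)
      = (Matrix.of e).rank := rfl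
  rw [h1, ← Matrix.rank_transpose, matrank, Matrix.range_mulVecLin, Matrix.col_transpose]
  have : Set.range (Matrix.of e).row = Set.range e := rfl
  rw [this, finrank_span_eq_card he, Module.finrank_pi]
end Indep

lemma col_zero_of_prec (S : Finset m) (X : Matrix m m F)
    (h : (Matrix.diagonal (fun k => if k ∈ S then (1 : F) else 0) - X).rank + X.rank
      = S.card) :
    ∀ a ∉ S, ∀ c, X a c = 0 := by
  classical
  rw [← rank_diag_finset (F := F) S] at h
  set D := Matrix.diagonal (fun k => if k ∈ S then (1 : F) else 0) with hD
  have hDX : D - X + X = D := by abel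
  have hadd : ((D - X) + X).rank = (D - X).rank + X.rank := by rw [hDX, h]
  have hr := range_le_of_rank_add (D - X) X hadd
  rw [hDX] at hr
  intro a ha c
  have hcol : (Xᵀ c) ∈ LinearMap.range X.mulVecLin :=
    ⟨Pi.single c 1, by rw [mulVecLin_apply, Matrix.mulVec_single_one]; rfl⟩
  obtain ⟨y, hy⟩ := hr hcol
  have := congrFun hy a
  rw [mulVecLin_apply] at this
  rw [hD, mulVec_diagonal] at this
  simp only [ha, if_false, zero_mul] at this
  exact (this ▸ rfl : X a c = 0).symm ▸ this.symm ▸ rfl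

lemma sum_vecMulVec_eq {N n : ℕ} (e₁ e₂ : Fin N → (Fin n → F)) (S : Finset (Fin N)) :
    (∑ k ∈ S, Matrix.vecMulVec (e₁ k) (e₂ k)) =
      (Matrix.of e₁)ᵀ * Matrix.diagonal (fun k => if k ∈ S then (1 : F) else 0) * Matrix.of e₂ := by
  classical
  ext a c
  rw [Matrix.sum_apply]
  simp only [Matrix.vecMulVec_apply]
  rw [Matrix.mul_apply]
  simp only [Matrix.mul_diagonal]
  simp only [mul_ite, ite_mul, mul_one, mul_zero, zero_mul]
  rw [Finset.sum_ite_mem, Finset.univ_inter]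
  rfl


/-- The generator matrix `G_Had^{(r)}` of the length-`2^{r+1}−1` Hadamard code:
the entry in row `k` (zero-indexed; corresponding to the 1-indexed row `k+1`) and
column `j` is bit number `r − j` of the binary representation of `2^{r+1} − (k+1)`
(most significant bit first). -/
def GHad (r : ℕ) : Matrix (Fin (2 ^ (r + 1) - 1)) (Fin (r + 1)) (ZMod 2) :=
  fun k j => if Nat.testBit (2 ^ (r + 1) - (k.val + 1)) (r - j.val) then 1 else 0

lemma GHad_eq_one_iff (r : ℕ) (k : Fin (2 ^ (r + 1) - 1)) (j : Fin (r + 1)) :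
    GHad r k j = 1 ↔ Nat.testBit k.val (r - j.val) = false := by
  have hk1 : k.val < 2 ^ (r + 1) := by have := k.isLt; omega
  have ht : r - j.val < r + 1 := by omega
  have harg : 2 ^ (r + 1) - (k.val + 1) = 2 ^ (r + 1) - 1 - k.val := by
    have : 1 ≤ 2 ^ (r + 1) := Nat.one_le_two_pow
    omega
  rw [GHad]
  rw [harg, testBit_compl _ _ _ hk1 ht]
  rcases h : Nat.testBit k.val (r - j.val) <;> simp [h]

lemma card_Sj (r : ℕ) (j : Fin (r + 1)) :
    (Finset.univ.filter (fun k : Fin (2 ^ (r + 1) - 1) => GHad r k j = 1)).card = 2 ^ r := by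
  classical
  have hN1 : (2 ^ (r + 1) - 1) + 1 = 2 ^ (r + 1) := by
    have : 1 ≤ 2 ^ (r + 1) := Nat.one_le_two_pow
    omega
  have hcongr : (Finset.univ.filter (fun k : Fin (2 ^ (r + 1) - 1) => GHad r k j = 1))
      = (Finset.univ.filter (fun k : Fin (2 ^ (r + 1) - 1)
          => Nat.testBit k.val (r - j.val) = false)) := by
    apply Finset.filter_congr
    intro k _
    simp [GHad_eq_one_iff r k j]
  rw [hcongr, card_filter_fin _ (fun v => Nat.testBit v (r - j.val) = false)]
  have h2 : ((Finset.range ((2 ^ (r + 1) - 1) + 1)).filter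
      (fun v => Nat.testBit v (r - j.val) = false)).card
      = ((Finset.range (2 ^ (r + 1) - 1)).filter
        (fun v => Nat.testBit v (r - j.val) = false)).card := by
    rw [Finset.range_add_one, Finset.filter_insert]
    have hbit : Nat.testBit (2 ^ (r + 1) - 1) (r - j.val) = true := by
      rw [Nat.testBit_two_pow_sub_one]
      simp
    rw [if_neg (by simp [hbit])]
  have h3 := card_testBit_false (r + 1) (r - j.val) (by omega)
  rw [hN1] at h2
  rw [← h2, h3]
  norm_num

lemma card_Sp (r i : ℕ) (hi : i ≤ r) :
    (Finset.univ.filter (fun k : Fin (2 ^ (r + 1) - 1) => k.val < 2 ^ (r - i))).card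
      = 2 ^ (r - i) := by
  classical
  rw [card_filter_fin _ (fun v => v < 2 ^ (r - i))]
  have hle : 2 ^ (r - i) ≤ 2 ^ (r + 1) - 1 := by
    have h1 : 2 ^ (r - i) ≤ 2 ^ r := Nat.pow_le_pow_right (by norm_num) (by omega)
    have h2 : 2 ^ r < 2 ^ (r + 1) := Nat.pow_lt_pow_right one_lt_two (by omega)
    omega
  have : (Finset.range (2 ^ (r + 1) - 1)).filter (fun v => v < 2 ^ (r - i))
      = Finset.range (2 ^ (r - i)) := by
    ext v
    simp only [Finset.mem_filter, Finset.mem_range]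
    constructor
    · exact fun h => h.2
    · intro h
      exact ⟨by omega, h⟩
  rw [this, Finset.card_range]

lemma Sp_subset (r i : ℕ) (hi : i ≤ r) (j : Fin (r + 1)) (hj : j.val ≤ i) :
    (Finset.univ.filter (fun k : Fin (2 ^ (r + 1) - 1) => k.val < 2 ^ (r - i)))
      ⊆ (Finset.univ.filter (fun k : Fin (2 ^ (r + 1) - 1) => GHad r k j = 1)) := by
  intro k hk
  simp only [Finset.mem_filter, Finset.mem_univ, true_and] at hk ⊢
  rw [GHad_eq_one_iff]
  apply Nat.testBit_lt_two_pow
  calc k.val < 2 ^ (r - i) := hk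
    _ ≤ 2 ^ (r - j.val) := Nat.pow_le_pow_right (by norm_num) (by omega)

lemma exists_not_Sj (r i : ℕ) (hi : i ≤ r) (a : Fin (2 ^ (r + 1) - 1))
    (ha : ¬ a.val < 2 ^ (r - i)) :
    ∃ j : Fin (r + 1), j.val ≤ i ∧ ¬ (GHad r a j = 1) := by
  push_neg at ha
  obtain ⟨t, ht, htb⟩ := Nat.exists_ge_and_testBit_of_ge_two_pow ha
  have hav : a.val < 2 ^ (r + 1) := by have := a.isLt; omega
  have htr : t ≤ r := by
    by_contra hc
    have : a.val < 2 ^ t := lt_of_lt_of_le hav (Nat.pow_le_pow_right (by norm_num) (by omega))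
    rw [Nat.testBit_lt_two_pow this] at htb
    exact Bool.false_ne_true htb
  refine ⟨⟨r - t, by omega⟩, by simp; omega, ?_⟩
  rw [GHad_eq_one_iff]
  simp only
  have hrt : r - (r - t) = t := by omega
  rw [hrt, htb]
  simp

/-- Given linearly independent families `e₁, e₂` of `2^{r+1}−1` vectors
in `F_q^n` and `0 ≤ i ≤ r`, let `M_j = Σ_{k : G_Had^{(r)}(k,j)=1} e₁ₖ e₂ₖᵀ` for `0 ≤ j ≤ i`
and `M' = Σ_{k=1}^{2^{r−i}} e₁ₖ e₂ₖᵀ`. Then `rank M' = 2^{r−i}`, `M' ⪯ M_j` for each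
`j ≤ i` (each `M_j` having rank `2^r`), and any `M''` dominated by all the `M_j` is
dominated by `M'`: `M'` is the unique maximal element among matrices dominated by
`M₀, …, M_i` in the matrix poset. -/
theorem stmt6 (r b n i : ℕ) (hr : 1 ≤ r) (hb : 1 ≤ b) (hn : 2 ^ (r + 1) ≤ n) (hi : i ≤ r)
    (e₁ e₂ : Fin (2 ^ (r + 1) - 1) → (Fin n → GaloisField 2 b))
    (h₁ : LinearIndependent (GaloisField 2 b) e₁)
    (h₂ : LinearIndependent (GaloisField 2 b) e₂) :
    let M : Fin (r + 1) → Matrix (Fin n) (Fin n) (GaloisField 2 b) := fun j =>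
      ∑ k ∈ Finset.univ.filter (fun k => GHad r k j = 1), Matrix.vecMulVec (e₁ k) (e₂ k)
    let M' : Matrix (Fin n) (Fin n) (GaloisField 2 b) :=
      ∑ k ∈ Finset.univ.filter (fun k : Fin (2 ^ (r + 1) - 1) => k.val < 2 ^ (r - i)),
        Matrix.vecMulVec (e₁ k) (e₂ k)
    M'.rank = 2 ^ (r - i) ∧
      (∀ j : Fin (r + 1), j.val ≤ i →
        (M j).rank = 2 ^ r ∧ (M j - M').rank = 2 ^ r - 2 ^ (r - i)) ∧
      (∀ M'' : Matrix (Fin n) (Fin n) (GaloisField 2 b),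
        (∀ j : Fin (r + 1), j.val ≤ i → (M j - M'').rank + M''.rank = (M j).rank) →
        (M' - M'').rank + M''.rank = 2 ^ (r - i)) := by
  classical
  intro M M'
  have hM : ∀ j, M j = (Matrix.of e₁)ᵀ
      * Matrix.diagonal (fun k => if k ∈ Finset.univ.filter
          (fun k : Fin (2 ^ (r + 1) - 1) => GHad r k j = 1) then (1 : GaloisField 2 b) else 0)
      * Matrix.of e₂ := fun j => sum_vecMulVec_eq e₁ e₂ _
  have hM' : M' = (Matrix.of e₁)ᵀ
      * Matrix.diagonal (fun k => if k ∈ Finset.univ.filter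
          (fun k : Fin (2 ^ (r + 1) - 1) => k.val < 2 ^ (r - i))
            then (1 : GaloisField 2 b) else 0)
      * Matrix.of e₂ := sum_vecMulVec_eq e₁ e₂ _
  have hinj : Function.Injective ((Matrix.of e₁)ᵀ).mulVecLin := inj_of_indep e₁ h₁
  have hsurj : Function.Surjective (Matrix.of e₂).mulVecLin := surj_of_indep e₂ h₂
  have hΦrank : ∀ X : Matrix (Fin (2 ^ (r + 1) - 1)) (Fin (2 ^ (r + 1) - 1)) (GaloisField 2 b),
      ((Matrix.of e₁)ᵀ * X * Matrix.of e₂).rank = X.rank := by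
    intro X
    rw [rank_mul_right_surj _ _ hsurj, rank_mul_left_inj _ _ hinj]
  have hΦsub : ∀ X Y : Matrix (Fin (2 ^ (r + 1) - 1)) (Fin (2 ^ (r + 1) - 1)) (GaloisField 2 b),
      (Matrix.of e₁)ᵀ * X * Matrix.of e₂ - (Matrix.of e₁)ᵀ * Y * Matrix.of e₂
        = (Matrix.of e₁)ᵀ * (X - Y) * Matrix.of e₂ := by
    intro X Y
    rw [Matrix.mul_sub, Matrix.sub_mul]
  have part1 : M'.rank = 2 ^ (r - i) := by
    rw [hM', hΦrank, rank_diag_finset, card_Sp r i hi]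
  refine ⟨part1, ?_, ?_⟩
  · intro j hj
    constructor
    · rw [hM j, hΦrank, rank_diag_finset, card_Sj r j]
    · have hDD : Matrix.diagonal (fun k => if k ∈ Finset.univ.filter
            (fun k : Fin (2 ^ (r + 1) - 1) => GHad r k j = 1)
              then (1 : GaloisField 2 b) else 0)
          - Matrix.diagonal (fun k => if k ∈ Finset.univ.filter
            (fun k : Fin (2 ^ (r + 1) - 1) => k.val < 2 ^ (r - i))
              then (1 : GaloisField 2 b) else 0)
          = Matrix.diagonal (fun k => if k ∈ (Finset.univ.filter
              (fun k : Fin (2 ^ (r + 1) - 1) => GHad r k j = 1))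
              \ (Finset.univ.filter (fun k : Fin (2 ^ (r + 1) - 1) => k.val < 2 ^ (r - i)))
              then (1 : GaloisField 2 b) else 0) := by
        ext a c
        by_cases h : a = c
        · subst h
          simp only [Matrix.sub_apply, Matrix.diagonal_apply_eq, Finset.mem_sdiff]
          by_cases hk' : a ∈ Finset.univ.filter
              (fun k : Fin (2 ^ (r + 1) - 1) => k.val < 2 ^ (r - i))
          · have hkj := Sp_subset r i hi j hj hk'
            simp [hk', hkj]
          · simp [hk']
        · simp [Matrix.sub_apply, Matrix.diagonal_apply_ne _ h]
      rw [hM j, hM', hΦsub, hDD, hΦrank, rank_diag_finset,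
        Finset.card_sdiff_of_subset (Sp_subset r i hi j hj), card_Sj r j, card_Sp r i hi]
  · intro M'' hM''
    have hj0 : (0 : ℕ) < r + 1 := by omega
    have hj0i : (⟨0, hj0⟩ : Fin (r + 1)).val ≤ i := Nat.zero_le i
    have h0 := hM'' ⟨0, hj0⟩ hj0i
    have hcol : LinearMap.range M''.mulVecLin
        ≤ LinearMap.range ((Matrix.of e₁)ᵀ).mulVecLin := by
      have hDX : M ⟨0, hj0⟩ - M'' + M'' = M ⟨0, hj0⟩ := by abel
      have hadd : ((M ⟨0, hj0⟩ - M'') + M'').rank = (M ⟨0, hj0⟩ - M'').rank + M''.rank := by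
        rw [hDX, h0]
      have hr' := range_le_of_rank_add (M ⟨0, hj0⟩ - M'') M'' hadd
      rw [hDX] at hr'
      refine le_trans hr' ?_
      rw [hM ⟨0, hj0⟩, Matrix.mul_assoc, Matrix.mulVecLin_mul]
      exact LinearMap.range_comp_le_range _ _
    have hYex : ∀ c : Fin n, ∃ y, (Matrix.of e₁)ᵀ *ᵥ y = M''ᵀ c := by
      intro c
      exact hcol ⟨Pi.single c 1, by rw [mulVecLin_apply, Matrix.mulVec_single_one]; rfl⟩
    choose Y hY using hYex
    have hMY : M'' = (Matrix.of e₁)ᵀ * Matrix.of (fun k c => Y c k) := by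
      ext a c
      rw [Matrix.mul_apply]
      exact (congrFun (hY c) a).symm
    have h0T : ((M ⟨0, hj0⟩)ᵀ - M''ᵀ).rank + M''ᵀ.rank = ((M ⟨0, hj0⟩)ᵀ).rank := by
      rw [← Matrix.transpose_sub, Matrix.rank_transpose, Matrix.rank_transpose,
        Matrix.rank_transpose]
      exact h0
    have hrow : LinearMap.range M''ᵀ.mulVecLin
        ≤ LinearMap.range ((Matrix.of e₂)ᵀ).mulVecLin := by
      have hDX : (M ⟨0, hj0⟩)ᵀ - M''ᵀ + M''ᵀ = (M ⟨0, hj0⟩)ᵀ := by abel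
      have hadd : (((M ⟨0, hj0⟩)ᵀ - M''ᵀ) + M''ᵀ).rank
          = ((M ⟨0, hj0⟩)ᵀ - M''ᵀ).rank + M''ᵀ.rank := by
        rw [hDX, h0T]
      have hr' := range_le_of_rank_add ((M ⟨0, hj0⟩)ᵀ - M''ᵀ) M''ᵀ hadd
      rw [hDX] at hr'
      refine le_trans hr' ?_
      rw [hM ⟨0, hj0⟩, Matrix.transpose_mul, Matrix.transpose_mul, ← Matrix.mul_assoc,
        Matrix.mul_assoc, Matrix.mulVecLin_mul]
      exact LinearMap.range_comp_le_range _ _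
    have hZex : ∀ c : Fin n, ∃ z, (Matrix.of e₂)ᵀ *ᵥ z = (M''ᵀ)ᵀ c := by
      intro c
      exact hrow ⟨Pi.single c 1, by rw [mulVecLin_apply, Matrix.mulVec_single_one]; rfl⟩
    choose Z hZ using hZex
    have hMZ : M''ᵀ = (Matrix.of e₂)ᵀ * Matrix.of (fun k c => Z c k) := by
      ext a c
      rw [Matrix.mul_apply]
      exact (congrFun (hZ c) a).symm
    have hMZ' : M'' = (Matrix.of (fun k c => Z c k))ᵀ * Matrix.of e₂ := by
      have := congrArg Matrix.transpose hMZ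
      rw [Matrix.transpose_transpose, Matrix.transpose_mul, Matrix.transpose_transpose] at this
      exact this
    obtain ⟨g, hg⟩ := LinearMap.exists_leftInverse_of_injective ((Matrix.of e₁)ᵀ).mulVecLin
      (LinearMap.ker_eq_bot.mpr hinj)
    have hLE : LinearMap.toMatrix' g * (Matrix.of e₁)ᵀ = 1 := by
      have hE₁' : (Matrix.of e₁)ᵀ = LinearMap.toMatrix' (Matrix.toLin' (Matrix.of e₁)ᵀ) := by
        rw [LinearMap.toMatrix'_toLin']
      conv_lhs => rw [hE₁', ← LinearMap.toMatrix'_comp]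
      rw [Matrix.toLin'_apply'] at *
      rw [hg]
      exact LinearMap.toMatrix'_id
    have hXM : (Matrix.of e₁)ᵀ * (LinearMap.toMatrix' g * (Matrix.of (fun k c => Z c k))ᵀ)
        * Matrix.of e₂ = M'' := by
      have h1 : (Matrix.of (fun k c => Z c k))ᵀ * Matrix.of e₂
          = (Matrix.of e₁)ᵀ * Matrix.of (fun k c => Y c k) := by rw [← hMZ', ← hMY]
      calc (Matrix.of e₁)ᵀ * (LinearMap.toMatrix' g * (Matrix.of (fun k c => Z c k))ᵀ)
            * Matrix.of e₂
          = (Matrix.of e₁)ᵀ * (LinearMap.toMatrix' g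
            * ((Matrix.of (fun k c => Z c k))ᵀ * Matrix.of e₂)) := by
            rw [Matrix.mul_assoc, Matrix.mul_assoc]
        _ = (Matrix.of e₁)ᵀ * (LinearMap.toMatrix' g
            * ((Matrix.of e₁)ᵀ * Matrix.of (fun k c => Y c k))) := by rw [h1]
        _ = (Matrix.of e₁)ᵀ * ((LinearMap.toMatrix' g * (Matrix.of e₁)ᵀ)
            * Matrix.of (fun k c => Y c k)) := by rw [Matrix.mul_assoc]
        _ = (Matrix.of e₁)ᵀ * Matrix.of (fun k c => Y c k) := by
            rw [hLE, Matrix.one_mul]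
        _ = M'' := hMY.symm
    set X : Matrix (Fin (2 ^ (r + 1) - 1)) (Fin (2 ^ (r + 1) - 1)) (GaloisField 2 b)
      := LinearMap.toMatrix' g * (Matrix.of (fun k c => Z c k))ᵀ with hXdef
    have hXrank : ∀ j : Fin (r + 1), j.val ≤ i →
        (Matrix.diagonal (fun k => if k ∈ Finset.univ.filter
            (fun k : Fin (2 ^ (r + 1) - 1) => GHad r k j = 1)
              then (1 : GaloisField 2 b) else 0) - X).rank + X.rank
          = (Finset.univ.filter (fun k : Fin (2 ^ (r + 1) - 1) => GHad r k j = 1)).card := by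
      intro j hj
      have hh := hM'' j hj
      rw [hM j, ← hXM, hΦsub, hΦrank, hΦrank, hΦrank, rank_diag_finset] at hh
      exact hh
    have hsuppRow : ∀ (j : Fin (r + 1)), j.val ≤ i →
        ∀ a, ¬ (GHad r a j = 1) → ∀ c, X a c = 0 := by
      intro j hj a ha c
      exact col_zero_of_prec _ X (hXrank j hj) a (by simp [ha]) c
    have hsuppCol : ∀ (j : Fin (r + 1)), j.val ≤ i →
        ∀ a, ¬ (GHad r a j = 1) → ∀ c, X c a = 0 := by
      intro j hj a ha c
      have hh := hXrank j hj
      have hhT : (Matrix.diagonal (fun k => if k ∈ Finset.univ.filter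
            (fun k : Fin (2 ^ (r + 1) - 1) => GHad r k j = 1)
              then (1 : GaloisField 2 b) else 0) - Xᵀ).rank + Xᵀ.rank
          = (Finset.univ.filter (fun k : Fin (2 ^ (r + 1) - 1) => GHad r k j = 1)).card := by
        rw [show (Matrix.diagonal (fun k => if k ∈ Finset.univ.filter
            (fun k : Fin (2 ^ (r + 1) - 1) => GHad r k j = 1)
              then (1 : GaloisField 2 b) else 0) - Xᵀ)
            = (Matrix.diagonal (fun k => if k ∈ Finset.univ.filter
            (fun k : Fin (2 ^ (r + 1) - 1) => GHad r k j = 1)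
              then (1 : GaloisField 2 b) else 0) - X)ᵀ from by
          rw [Matrix.transpose_sub, Matrix.diagonal_transpose],
          Matrix.rank_transpose, Matrix.rank_transpose]
        exact hh
      exact col_zero_of_prec _ Xᵀ hhT a (by simp [ha]) c
    have hXsupp : ∀ a c : Fin (2 ^ (r + 1) - 1),
        (¬ a.val < 2 ^ (r - i)) ∨ (¬ c.val < 2 ^ (r - i)) → X a c = 0 := by
      intro a c hac
      rcases hac with ha | hc
      · obtain ⟨j, hj, haj⟩ := exists_not_Sj r i hi a ha
        exact hsuppRow j hj a haj c
      · obtain ⟨j, hj, hcj⟩ := exists_not_Sj r i hi c hc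
        exact hsuppCol j hj c hcj a
    -- block decomposition with T = S j0 \ S'
    have hB : ∀ a c : Fin (2 ^ (r + 1) - 1),
        a ∈ (Finset.univ.filter (fun k : Fin (2 ^ (r + 1) - 1) => GHad r k ⟨0, hj0⟩ = 1))
            \ (Finset.univ.filter (fun k : Fin (2 ^ (r + 1) - 1) => k.val < 2 ^ (r - i)))
          ∨ c ∈ (Finset.univ.filter (fun k : Fin (2 ^ (r + 1) - 1) => GHad r k ⟨0, hj0⟩ = 1))
            \ (Finset.univ.filter (fun k : Fin (2 ^ (r + 1) - 1) => k.val < 2 ^ (r - i))) →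
        (Matrix.diagonal (fun k => if k ∈ Finset.univ.filter
            (fun k : Fin (2 ^ (r + 1) - 1) => k.val < 2 ^ (r - i))
              then (1 : GaloisField 2 b) else 0) - X) a c = 0 := by
      intro a c hac
      have hmem : ∀ k : Fin (2 ^ (r + 1) - 1),
          k ∈ (Finset.univ.filter (fun k : Fin (2 ^ (r + 1) - 1) => GHad r k ⟨0, hj0⟩ = 1))
            \ (Finset.univ.filter (fun k : Fin (2 ^ (r + 1) - 1) => k.val < 2 ^ (r - i)))
          → ¬ k.val < 2 ^ (r - i) := by
        intro k hk
        have := (Finset.mem_sdiff.mp hk).2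
        simpa using this
      have hXac : X a c = 0 := by
        apply hXsupp
        rcases hac with h | h
        · exact Or.inl (hmem a h)
        · exact Or.inr (hmem c h)
      rw [Matrix.sub_apply, hXac, sub_zero]
      by_cases h : a = c
      · subst h
        rw [Matrix.diagonal_apply_eq]
        have haS' : ¬ a.val < 2 ^ (r - i) := by
          rcases hac with h | h <;> exact hmem _ h
        simp [Finset.mem_filter, haS']
      · rw [Matrix.diagonal_apply_ne _ h]
    have hblock := rank_diag_add_block
      ((Finset.univ.filter (fun k : Fin (2 ^ (r + 1) - 1) => GHad r k ⟨0, hj0⟩ = 1))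
        \ (Finset.univ.filter (fun k : Fin (2 ^ (r + 1) - 1) => k.val < 2 ^ (r - i))))
      (Matrix.diagonal (fun k => if k ∈ Finset.univ.filter
          (fun k : Fin (2 ^ (r + 1) - 1) => k.val < 2 ^ (r - i))
            then (1 : GaloisField 2 b) else 0) - X) hB
    have hcardT : ((Finset.univ.filter
          (fun k : Fin (2 ^ (r + 1) - 1) => GHad r k ⟨0, hj0⟩ = 1))
        \ (Finset.univ.filter (fun k : Fin (2 ^ (r + 1) - 1) => k.val < 2 ^ (r - i)))).card
        = 2 ^ r - 2 ^ (r - i) := by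
      rw [Finset.card_sdiff_of_subset (Sp_subset r i hi ⟨0, hj0⟩ hj0i), card_Sj, card_Sp r i hi]
    have hfin := hXrank ⟨0, hj0⟩ hj0i
    have hsplit : Matrix.diagonal (fun k => if k ∈ Finset.univ.filter
          (fun k : Fin (2 ^ (r + 1) - 1) => GHad r k ⟨0, hj0⟩ = 1)
            then (1 : GaloisField 2 b) else 0) - X
        = Matrix.diagonal (fun k => if k ∈ (Finset.univ.filter
            (fun k : Fin (2 ^ (r + 1) - 1) => GHad r k ⟨0, hj0⟩ = 1))
            \ (Finset.univ.filter (fun k : Fin (2 ^ (r + 1) - 1) => k.val < 2 ^ (r - i)))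
            then (1 : GaloisField 2 b) else 0)
          + (Matrix.diagonal (fun k => if k ∈ Finset.univ.filter
            (fun k : Fin (2 ^ (r + 1) - 1) => k.val < 2 ^ (r - i))
              then (1 : GaloisField 2 b) else 0) - X) := by
      ext a c
      by_cases h : a = c
      · subst h
        simp only [Matrix.sub_apply, Matrix.add_apply, Matrix.diagonal_apply_eq,
          Finset.mem_sdiff]
        by_cases hk' : a ∈ Finset.univ.filter
            (fun k : Fin (2 ^ (r + 1) - 1) => k.val < 2 ^ (r - i))
        · have hkj := Sp_subset r i hi ⟨0, hj0⟩ hj0i hk'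
          simp only [Finset.mem_filter, Finset.mem_univ, true_and] at hk' hkj
          have hkj' : GHad r a 0 = 1 := hkj
          simp [hk', hkj, hkj', sub_eq_add_neg]
          exact if_pos (Finset.mem_filter.mpr ⟨Finset.mem_univ a, hkj⟩ : a ∈ Finset.univ.filter
            (fun k : Fin (2 ^ (r + 1) - 1) => GHad r k ⟨0, hj0⟩ = 1))
        · by_cases hkj : a ∈ Finset.univ.filter
              (fun k : Fin (2 ^ (r + 1) - 1) => GHad r k ⟨0, hj0⟩ = 1) <;>
            [skip; skip] <;>
            · simp only [Finset.mem_filter, Finset.mem_univ, true_and] at hk' hkj ⊢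
              first
              | (have hkj' : GHad r a 0 = 1 := hkj
                 simp [hk', hkj, hkj', sub_eq_add_neg])
              | (have hkj' : ¬ GHad r a 0 = 1 := hkj
                 simp [hk', hkj, hkj', sub_eq_add_neg])
      · simp [Matrix.sub_apply, Matrix.add_apply, Matrix.diagonal_apply_ne _ h]
    rw [hsplit, hblock, hcardT, card_Sj] at hfin
    have hpow_le : 2 ^ (r - i) ≤ 2 ^ r := Nat.pow_le_pow_right (by norm_num) (by omega)
    rw [hM', ← hXM, hΦsub, hΦrank, hΦrank]
    omega
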